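/- arXiv:0709.1607 — 3 statements merged into one kernel-verified Lean document; each statement's English description precedes it below -/
import Mathlib

section
/- Let φ be a C² solution of φ_tt - e^{-φ}φ_xx = -φ_t², and define v = φ_t, w = φ_x, p = v + e^{-φ/2}w, q = v - e^{-φ/2}w, λ = e^{-φ/2}. Then p satisfies the equation p_t - λ p_x = -(1/4)(p² + 3pq). -/
noncomputable def partialT (f : ℝ → ℝ → ℝ) (t x : ℝ) : ℝ :=
  deriv (fun s => f s x) t

noncomputable def partialX (f : ℝ → ℝ → ℝ) (t x : ℝ) : ℝ :=
  deriv (fun y => f t y) x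

/-- If `φ` is a C² solution of `φ_tt - e^{-φ} φ_xx = -φ_t²`, and
`p = φ_t + e^{-φ/2} φ_x`, `q = φ_t - e^{-φ/2} φ_x`, `λ = e^{-φ/2}`,
then `p_t - λ p_x = -(1/4)(p² + 3 p q)`. -/
theorem stmt1 (φ : ℝ → ℝ → ℝ) (hφ : ContDiff ℝ 2 (Function.uncurry φ))
    (heq : ∀ t x, partialT (partialT φ) t x
        - Real.exp (-(φ t x)) * partialX (partialX φ) t x
        = -(partialT φ t x) ^ 2)
    (v w p q lam : ℝ → ℝ → ℝ)
    (hv : ∀ t x, v t x = partialT φ t x)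
    (hw : ∀ t x, w t x = partialX φ t x)
    (hp : ∀ t x, p t x = v t x + Real.exp (-(φ t x) / 2) * w t x)
    (hq : ∀ t x, q t x = v t x - Real.exp (-(φ t x) / 2) * w t x)
    (hlam : ∀ t x, lam t x = Real.exp (-(φ t x) / 2)) :
    ∀ t x, partialT p t x - lam t x * partialX p t x
      = -(1 / 4) * ((p t x) ^ 2 + 3 * p t x * q t x) := by
  intro t x
  set F : ℝ × ℝ → ℝ := Function.uncurry φ with hFdef
  have hFd : Differentiable ℝ F := hφ.differentiable (by norm_num)
  have hFd2 : Differentiable ℝ (fun y => fderiv ℝ F y) :=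
    (hφ.fderiv_right (m := 1) (by norm_num)).differentiable (by norm_num)
  -- lines
  have hlineT : ∀ (a b : ℝ), HasDerivAt (fun s : ℝ => ((s, b) : ℝ × ℝ)) ((1, 0) : ℝ × ℝ) a :=
    fun a b => HasDerivAt.prodMk (hasDerivAt_id a) (hasDerivAt_const a b)
  have hlineX : ∀ (a b : ℝ), HasDerivAt (fun y : ℝ => ((a, y) : ℝ × ℝ)) ((0, 1) : ℝ × ℝ) b :=
    fun a b => HasDerivAt.prodMk (hasDerivAt_const b a) (hasDerivAt_id b)
  -- first partials
  have hA : ∀ a b : ℝ, HasDerivAt (fun s => φ s b) (fderiv ℝ F (a, b) (1, 0)) a := by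
    intro a b
    have := ((hFd (a, b)).hasFDerivAt).comp_hasDerivAt a (hlineT a b)
    exact this
  have hB : ∀ a b : ℝ, HasDerivAt (fun y => φ a y) (fderiv ℝ F (a, b) (0, 1)) b := by
    intro a b
    have := ((hFd (a, b)).hasFDerivAt).comp_hasDerivAt b (hlineX a b)
    exact this
  have hpT : ∀ a b : ℝ, partialT φ a b = fderiv ℝ F (a, b) (1, 0) := fun a b => (hA a b).deriv
  have hpX : ∀ a b : ℝ, partialX φ a b = fderiv ℝ F (a, b) (0, 1) := fun a b => (hB a b).deriv
  -- second partials
  have hGu : ∀ (u : ℝ × ℝ) (y : ℝ × ℝ), HasFDerivAt (fun z => fderiv ℝ F z u)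
      ((ContinuousLinearMap.apply ℝ ℝ u).comp (fderiv ℝ (fun z => fderiv ℝ F z) y)) y := by
    intro u y
    exact (ContinuousLinearMap.apply ℝ ℝ u).hasFDerivAt.comp y (hFd2 y).hasFDerivAt
  have hTu : ∀ (u : ℝ × ℝ) (a b : ℝ), HasDerivAt (fun s => fderiv ℝ F (s, b) u)
      (fderiv ℝ (fun z => fderiv ℝ F z) (a, b) (1, 0) u) a := by
    intro u a b
    have := (hGu u (a, b)).comp_hasDerivAt a (hlineT a b)
    exact this
  have hXu : ∀ (u : ℝ × ℝ) (a b : ℝ), HasDerivAt (fun y => fderiv ℝ F (a, y) u)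
      (fderiv ℝ (fun z => fderiv ℝ F z) (a, b) (0, 1) u) b := by
    intro u a b
    have := (hGu u (a, b)).comp_hasDerivAt b (hlineX a b)
    exact this
  set B := fderiv ℝ (fun z => fderiv ℝ F z) (t, x) with hBdef
  set A := fderiv ℝ F (t, x) with hAdef
  -- symmetry of second derivative
  have hsym : B (1, 0) (0, 1) = B (0, 1) (1, 0) :=
    second_derivative_symmetric (fun y => (hFd y).hasFDerivAt) ((hFd2 (t, x)).hasFDerivAt)
      (1, 0) (0, 1)
  -- PDE in coordinates
  have hPDE : B (1, 0) (1, 0) - Real.exp (-(φ t x)) * B (0, 1) (0, 1) = -(A (1, 0)) ^ 2 := by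
    have h := heq t x
    have e1 : partialT (partialT φ) t x = B (1, 0) (1, 0) := by
      show deriv (fun s => partialT φ s x) t = _
      have : (fun s => partialT φ s x) = fun s => fderiv ℝ F (s, x) (1, 0) :=
        funext fun s => hpT s x
      rw [this, (hTu (1, 0) t x).deriv]
    have e2 : partialX (partialX φ) t x = B (0, 1) (0, 1) := by
      show deriv (fun y => partialX φ t y) x = _
      have : (fun y => partialX φ t y) = fun y => fderiv ℝ F (t, y) (0, 1) :=
        funext fun y => hpX t y
      rw [this, (hXu (0, 1) t x).deriv]
    rw [e1, e2, hpT t x] at h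
    exact h
  set E := Real.exp (-(φ t x) / 2) with hEdef
  have hE2 : Real.exp (-(φ t x)) = E * E := by
    rw [hEdef, ← Real.exp_add]; ring_nf
  -- compute partialT p
  have hexpT : HasDerivAt (fun s => Real.exp (-(φ s x) / 2)) (E * (-(A (1, 0)) / 2)) t :=
    (((hA t x).neg).div_const 2).exp
  have hexpX : HasDerivAt (fun y => Real.exp (-(φ t y) / 2)) (E * (-(A (0, 1)) / 2)) x :=
    (((hB t x).neg).div_const 2).exp
  have hPt : partialT p t x = B (1, 0) (1, 0)
      + (E * (-(A (1, 0)) / 2) * (A (0, 1)) + E * B (1, 0) (0, 1)) := by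
    show deriv (fun s => p s x) t = _
    have hrw : (fun s => p s x)
        = fun s => fderiv ℝ F (s, x) (1, 0) + Real.exp (-(φ s x) / 2) * fderiv ℝ F (s, x) (0, 1) := by
      funext s; rw [hp, hv, hw, hpT s x, hpX s x]
    rw [hrw]
    exact ((hTu (1, 0) t x).add (hexpT.mul (hTu (0, 1) t x))).deriv
  have hPx : partialX p t x = B (0, 1) (1, 0)
      + (E * (-(A (0, 1)) / 2) * (A (0, 1)) + E * B (0, 1) (0, 1)) := by
    show deriv (fun y => p t y) x = _
    have hrw : (fun y => p t y)
        = fun y => fderiv ℝ F (t, y) (1, 0) + Real.exp (-(φ t y) / 2) * fderiv ℝ F (t, y) (0, 1) := by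
      funext y; rw [hp, hv, hw, hpT t y, hpX t y]
    rw [hrw]
    exact ((hXu (1, 0) t x).add (hexpX.mul (hXu (0, 1) t x))).deriv
  rw [hPt, hPx, hp, hq, hv, hw, hlam, hpT, hpX, hsym, ← hEdef]
  rw [hE2] at hPDE
  linear_combination hPDE
end

section
/- Let φ be a C² solution of φ_tt - e^{-φ}φ_xx = -φ_t², and define p = φ_t + e^{-φ/2}φ_x, q = φ_t - e^{-φ/2}φ_x, λ = e^{-φ/2}. Then q satisfies q_t + λ q_x = -(1/4)(q² + 3pq). -/
/-- If `φ` is a C² solution of `φ_tt - e^{-φ} φ_xx = -φ_t²`, and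
`p = φ_t + e^{-φ/2} φ_x`, `q = φ_t - e^{-φ/2} φ_x`, `λ = e^{-φ/2}`,
then `q_t + λ q_x = -(1/4)(q² + 3 p q)`. -/
theorem stmt2 (φ : ℝ → ℝ → ℝ) (hφ : ContDiff ℝ 2 (Function.uncurry φ))
    (heq : ∀ t x, partialT (partialT φ) t x
        - Real.exp (-(φ t x)) * partialX (partialX φ) t x
        = -(partialT φ t x) ^ 2)
    (p q lam : ℝ → ℝ → ℝ)
    (hp : ∀ t x, p t x = partialT φ t x + Real.exp (-(φ t x) / 2) * partialX φ t x)
    (hq : ∀ t x, q t x = partialT φ t x - Real.exp (-(φ t x) / 2) * partialX φ t x)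
    (hlam : ∀ t x, lam t x = Real.exp (-(φ t x) / 2)) :
    ∀ t x, partialT q t x + lam t x * partialX q t x
      = -(1 / 4) * ((q t x) ^ 2 + 3 * p t x * q t x) := by
  intro t x
  set F := Function.uncurry φ with hF
  have hFd : Differentiable ℝ F := hφ.differentiable two_ne_zero
  have hf1 : ContDiff ℝ 1 (fderiv ℝ F) := hφ.fderiv_right (m := 1) (by norm_num)
  have hf1d : Differentiable ℝ (fderiv ℝ F) := hf1.differentiable one_ne_zero
  -- first order partial derivatives as directional derivatives
  have lineT : ∀ (s y : ℝ), HasDerivAt (fun s' : ℝ => ((s', y) : ℝ × ℝ)) (1, 0) s := by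
    intro s y
    simpa using (hasDerivAt_id s).prodMk (hasDerivAt_const s y)
  have lineX : ∀ (s y : ℝ), HasDerivAt (fun y' : ℝ => ((s, y') : ℝ × ℝ)) (0, 1) y := by
    intro s y
    simpa using (hasDerivAt_const y s).prodMk (hasDerivAt_id y)
  have keyT : ∀ (s y : ℝ), HasDerivAt (fun s' => φ s' y) (fderiv ℝ F (s, y) (1, 0)) s := by
    intro s y
    have h := ((hFd (s, y)).hasFDerivAt).comp_hasDerivAt s (lineT s y)
    simpa [hF, Function.uncurry, Function.comp_def] using h
  have keyX : ∀ (s y : ℝ), HasDerivAt (fun y' => φ s y') (fderiv ℝ F (s, y) (0, 1)) y := by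
    intro s y
    have h := ((hFd (s, y)).hasFDerivAt).comp_hasDerivAt y (lineX s y)
    simpa [hF, Function.uncurry, Function.comp_def] using h
  have hpt : ∀ s y, partialT φ s y = fderiv ℝ F (s, y) (1, 0) := fun s y => (keyT s y).deriv
  have hpx : ∀ s y, partialX φ s y = fderiv ℝ F (s, y) (0, 1) := fun s y => (keyX s y).deriv
  -- second order directional derivatives
  have key2T : ∀ (s y : ℝ) (v : ℝ × ℝ),
      HasDerivAt (fun s' => fderiv ℝ F (s', y) v)
        ((fderiv ℝ (fderiv ℝ F) (s, y) (1, 0)) v) s := by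
    intro s y v
    have h := ((hf1d (s, y)).hasFDerivAt).comp_hasDerivAt s (lineT s y)
    simpa using h.clm_apply (hasDerivAt_const s v)
  have key2X : ∀ (s y : ℝ) (v : ℝ × ℝ),
      HasDerivAt (fun y' => fderiv ℝ F (s, y') v)
        ((fderiv ℝ (fderiv ℝ F) (s, y) (0, 1)) v) y := by
    intro s y v
    have h := ((hf1d (s, y)).hasFDerivAt).comp_hasDerivAt y (lineX s y)
    simpa using h.clm_apply (hasDerivAt_const y v)
  set H := fderiv ℝ (fderiv ℝ F) (t, x) with hH
  have hsymm : H (1, 0) (0, 1) = H (0, 1) (1, 0) :=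
    second_derivative_symmetric (fun y => (hFd y).hasFDerivAt) ((hf1d (t, x)).hasFDerivAt) _ _
  set a := fderiv ℝ F (t, x) (1, 0) with ha
  set b := fderiv ℝ F (t, x) (0, 1) with hb
  set lm := Real.exp (-(φ t x) / 2) with hlm
  -- rewrite the PDE
  have e1 : partialT (partialT φ) t x = H (1, 0) (1, 0) := by
    have : (fun s => partialT φ s x) = fun s => fderiv ℝ F (s, x) (1, 0) :=
      funext fun s => hpt s x
    show deriv (fun s => partialT φ s x) t = _
    rw [this]
    exact (key2T t x (1, 0)).deriv
  have e2 : partialX (partialX φ) t x = H (0, 1) (0, 1) := by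
    have : (fun y => partialX φ t y) = fun y => fderiv ℝ F (t, y) (0, 1) :=
      funext fun y => hpx t y
    show deriv (fun y => partialX φ t y) x = _
    rw [this]
    exact (key2X t x (0, 1)).deriv
  have hPDE : H (1, 0) (1, 0) - Real.exp (-(φ t x)) * H (0, 1) (0, 1) = -a ^ 2 := by
    have := heq t x
    rwa [e1, e2, hpt] at this
  -- derivative of the exponential factor in t and x
  have hexpT : HasDerivAt (fun s => Real.exp (-(φ s x) / 2)) (lm * (-a / 2)) t := by
    have h := (((keyT t x).neg).div_const 2).exp
    simpa [hlm] using h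
  have hexpX : HasDerivAt (fun y => Real.exp (-(φ t y) / 2)) (lm * (-b / 2)) x := by
    have h := (((keyX t x).neg).div_const 2).exp
    simpa [hlm] using h
  -- compute partialT q
  have hqT : partialT q t x
      = H (1, 0) (1, 0) - (lm * (-a / 2) * b + lm * H (1, 0) (0, 1)) := by
    have hfun : (fun s => q s x)
        = fun s => fderiv ℝ F (s, x) (1, 0)
            - Real.exp (-(φ s x) / 2) * fderiv ℝ F (s, x) (0, 1) :=
      funext fun s => by rw [hq, hpt, hpx]
    have hd : HasDerivAt (fun s => q s x)
        (H (1, 0) (1, 0) - (lm * (-a / 2) * b + lm * H (1, 0) (0, 1))) t := by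
      rw [hfun]
      exact (key2T t x (1, 0)).sub (hexpT.mul (key2T t x (0, 1)))
    exact hd.deriv
  have hqX : partialX q t x
      = H (0, 1) (1, 0) - (lm * (-b / 2) * b + lm * H (0, 1) (0, 1)) := by
    have hfun : (fun y => q t y)
        = fun y => fderiv ℝ F (t, y) (1, 0)
            - Real.exp (-(φ t y) / 2) * fderiv ℝ F (t, y) (0, 1) :=
      funext fun y => by rw [hq, hpt, hpx]
    have hd : HasDerivAt (fun y => q t y)
        (H (0, 1) (1, 0) - (lm * (-b / 2) * b + lm * H (0, 1) (0, 1))) x := by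
      rw [hfun]
      exact (key2X t x (1, 0)).sub (hexpX.mul (key2X t x (0, 1)))
    exact hd.deriv
  have hexp2 : Real.exp (-(φ t x)) = lm * lm := by
    rw [hlm, ← Real.exp_add]; ring_nf
  have hH11 : H (1, 0) (1, 0) = lm * lm * H (0, 1) (0, 1) - a ^ 2 := by
    rw [← hexp2]; linarith [hPDE]
  rw [hqT, hqX, hlam, hp, hq, hpt, hpx, ← ha, ← hb, ← hlm, hsymm, hH11]
  ring
end

section
/- Let c, a, b be real numbers, f(t) defined by e^{f(t)} = (c/2)t² + at + b on an interval where (c/2)t² + at + b > 0, and let g : ℝ² → ℝ be a C² solution of the Liouville equation Δg = c·e^{g}. Then w(t,x,y) = f(t) + g(x,y) satisfies the equation w_tt + (w_t)² - e^{-w} Δw = 0. -/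
/-- Separation of variables: if `e^{f(t)} = (c/2)t² + at + b` on an open
interval where the quadratic is positive, and `g` is a C² solution of the
Liouville equation `Δg = c e^g`, then `w(t,x,y) = f(t) + g(x,y)` satisfies
`w_tt + w_t² - e^{-w} Δw = 0`. -/
theorem stmt15 (c a b : ℝ) (I : Set ℝ) (hI : IsOpen I)
    (hquad : ∀ t ∈ I, 0 < (c / 2) * t ^ 2 + a * t + b)
    (f : ℝ → ℝ)
    (hf : ∀ t ∈ I, Real.exp (f t) = (c / 2) * t ^ 2 + a * t + b)
    (g : ℝ → ℝ → ℝ) (hg : ContDiff ℝ 2 (Function.uncurry g))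
    (hLiouville : ∀ x y : ℝ,
      deriv (fun x' => deriv (fun x'' => g x'' y) x') x
        + deriv (fun y' => deriv (fun y'' => g x y'') y') y
        = c * Real.exp (g x y))
    (w : ℝ → ℝ → ℝ → ℝ) (hw : ∀ t x y, w t x y = f t + g x y) :
    ∀ t ∈ I, ∀ x y : ℝ,
      deriv (fun s => deriv (fun s' => w s' x y) s) t
        + (deriv (fun s => w s x y) t) ^ 2
        - Real.exp (-(w t x y))
          * (deriv (fun x' => deriv (fun x'' => w t x'' y) x') x
            + deriv (fun y' => deriv (fun y'' => w t x y'') y') y)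
        = 0 := by
  intro t ht x y
  set Q : ℝ → ℝ := fun s => (c / 2) * s ^ 2 + a * s + b with hQdef
  have hQt : Q t ≠ 0 := ne_of_gt (hquad t ht)
  -- spatial part
  have h1 : (fun x'' => w t x'' y) = fun x'' => f t + g x'' y := by
    funext u; exact hw t u y
  have h2 : (fun y'' => w t x y'') = fun y'' => f t + g x y'' := by
    funext u; exact hw t x u
  have hspace : deriv (fun x' => deriv (fun x'' => w t x'' y) x') x
      + deriv (fun y' => deriv (fun y'' => w t x y'') y') y
      = c * Real.exp (g x y) := by
    rw [h1, h2]
    simp only [deriv_const_add]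
    exact hLiouville x y
  -- derivative of Q
  have hQd : ∀ s : ℝ, HasDerivAt Q (c * s + a) s := by
    intro s
    have h := (((hasDerivAt_pow 2 s).const_mul (c / 2)).add
      ((hasDerivAt_id s).const_mul a)).add_const b
    exact h.congr_deriv (by push_cast; ring)
  -- f equals log ∘ Q on I
  have hfeq : ∀ s ∈ I, f s = Real.log (Q s) := by
    intro s hs
    simp only [hQdef]
    rw [← hf s hs, Real.log_exp]
  -- derivative of f on I
  have hfd : ∀ s ∈ I, HasDerivAt f ((c * s + a) / Q s) s := by
    intro s hs
    have hlog : HasDerivAt (fun u => Real.log (Q u)) ((Q s)⁻¹ * (c * s + a)) s :=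
      by have := (Real.hasDerivAt_log (ne_of_gt (hquad s hs))).comp s (hQd s); exact this
    have hev : f =ᶠ[nhds s] fun u => Real.log (Q u) := by
      filter_upwards [hI.mem_nhds hs] with u hu
      exact hfeq u hu
    have := hlog.congr_of_eventuallyEq hev
    simpa [inv_mul_eq_div] using this
  have hderiv_f : deriv f =ᶠ[nhds t] fun s => (c * s + a) / Q s := by
    filter_upwards [hI.mem_nhds ht] with s hs
    exact (hfd s hs).deriv
  -- second derivative of f at t
  have hN : HasDerivAt (fun s : ℝ => c * s + a) c t := by
    simpa using ((hasDerivAt_id t).const_mul c).add_const a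
  have hF : HasDerivAt (fun s => (c * s + a) / Q s)
      ((c * Q t - (c * t + a) * (c * t + a)) / (Q t) ^ 2) t :=
    hN.div (hQd t) hQt
  have hsnd : deriv (deriv f) t
      = (c * Q t - (c * t + a) * (c * t + a)) / (Q t) ^ 2 := by
    rw [hderiv_f.deriv_eq]
    exact hF.deriv
  -- time derivatives of w
  have h3 : (fun s' => w s' x y) = fun s' => f s' + g x y := by
    funext u; exact hw u x y
  have hwt : deriv (fun s => w s x y) t = (c * t + a) / Q t := by
    rw [h3, deriv_add_const]
    exact (hfd t ht).deriv
  have hwtt : deriv (fun s => deriv (fun s' => w s' x y) s) t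
      = (c * Q t - (c * t + a) * (c * t + a)) / (Q t) ^ 2 := by
    rw [h3]
    simp only [deriv_add_const]
    exact hsnd
  -- exp(-w)
  have hexp : Real.exp (-(w t x y)) = (Q t)⁻¹ * (Real.exp (g x y))⁻¹ := by
    simp only [hQdef]
    rw [hw t x y, neg_add, Real.exp_add, Real.exp_neg, Real.exp_neg, hf t ht]
  rw [hwtt, hwt, hspace, hexp]
  have hE : Real.exp (g x y) ≠ 0 := Real.exp_ne_zero _
  field_simp
  ring
end
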